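/- In the max-linear model, the extremal concurrence probability at sites s_1,...,s_k equals the sum of the domination probabilities: p(s_1,...,s_k) = ∑_{ℓ=1}^n p_ℓ(s_1,...,s_k), where p_ℓ = [∑_{m=1}^n max_{j=1..k} φ_m(s_j)/φ_ℓ(s_j)]^{-1}. -/

import Mathlib

open MeasureTheory ProbabilityTheory
open scoped ENNReal

section Aux

variable {Ω : Type*} [MeasureSpace Ω] [IsProbabilityMeasure (ℙ : Measure Ω)]

lemma frechet_point_null (Z0 : Ω → ℝ) (hm : Measurable Z0)
    (hpos : ∀ᵐ ω ∂ℙ, 0 < Z0 ω)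
    (hF0 : ∀ z : ℝ, 0 < z → ℙ {ω | Z0 ω ≤ z} = ENNReal.ofReal (Real.exp (-1 / z)))
    (x : ℝ) : ℙ {ω | Z0 ω = x} = 0 := by
  rcases le_or_gt x 0 with hx | hx
  · have h0 : ℙ {ω | ¬ 0 < Z0 ω} = 0 := ae_iff.mp hpos
    refine measure_mono_null (fun ω hω => ?_) h0
    simp only [Set.mem_setOf_eq] at *
    rw [hω]; exact not_lt.mpr hx
  · set a : ℕ → ℝ := fun n => x - x / (n + 2) with ha_def
    have hapos : ∀ n : ℕ, 0 < a n := by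
      intro n
      have h2 : (0:ℝ) < (n:ℝ) + 2 := by positivity
      have hlt : x / ((n:ℝ)+2) < x := by
        rw [div_lt_iff₀ h2]; nlinarith
      simpa [ha_def] using sub_pos.mpr hlt
    have halt : ∀ n : ℕ, a n < x := by
      intro n
      have h3 : 0 < x / ((n:ℝ)+2) := by positivity
      simp only [ha_def]; linarith
    have key : ∀ n : ℕ, ℙ {ω | Z0 ω = x}
        ≤ ENNReal.ofReal (Real.exp (-1/x) - Real.exp (-1/(a n))) := by
      intro n
      have hsub : {ω | Z0 ω = x} ⊆ {ω | Z0 ω ≤ x} \ {ω | Z0 ω ≤ a n} := by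
        intro ω hω
        simp only [Set.mem_setOf_eq, Set.mem_diff] at *
        exact ⟨le_of_eq hω, by rw [hω]; exact not_le.mpr (halt n)⟩
      refine le_trans (measure_mono hsub) ?_
      have hBA : {ω | Z0 ω ≤ a n} ⊆ {ω | Z0 ω ≤ x} :=
        fun ω h => le_trans h (le_of_lt (halt n))
      have hBm : MeasurableSet {ω | Z0 ω ≤ a n} := hm measurableSet_Iic
      rw [measure_diff hBA hBm.nullMeasurableSet (measure_ne_top ℙ _),
        hF0 x hx, hF0 (a n) (hapos n), ← ENNReal.ofReal_sub _ (Real.exp_nonneg _)]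
    have hlim : Filter.Tendsto
        (fun n : ℕ => ENNReal.ofReal (Real.exp (-1/x) - Real.exp (-1/(a n))))
        Filter.atTop (nhds 0) := by
      have h1 : Filter.Tendsto a Filter.atTop (nhds x) := by
        have h2 : Filter.Tendsto (fun n : ℕ => x / ((n:ℝ)+2)) Filter.atTop (nhds 0) := by
          have h3 := (tendsto_const_div_atTop_nhds_zero_nat x).comp
            (Filter.tendsto_add_atTop_nat 2)
          convert h3 using 2 with n
          push_cast [Function.comp]; ring_nf
        have := tendsto_const_nhds (x := x) (f := Filter.atTop (α := ℕ)) |>.sub h2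
        simpa [ha_def] using this
      have h2 : Filter.Tendsto (fun n => Real.exp (-1/(a n))) Filter.atTop
          (nhds (Real.exp (-1/x))) := by
        refine (Real.continuous_exp.tendsto _).comp ?_
        exact Filter.Tendsto.div tendsto_const_nhds h1 hx.ne'
      have h3 : Filter.Tendsto (fun n => Real.exp (-1/x) - Real.exp (-1/(a n)))
          Filter.atTop (nhds 0) := by
        have := (tendsto_const_nhds (x := Real.exp (-1/x))
          (f := Filter.atTop (α := ℕ))).sub h2
        simpa using this
      have := ENNReal.tendsto_ofReal h3
      simpa using this
    exact le_zero_iff.mp (ge_of_tendsto hlim (Filter.Eventually.of_forall key))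

lemma pair_null {n : ℕ} (Z : Fin n → Ω → ℝ)
    (hmeas : ∀ m, Measurable (Z m))
    (hindep : iIndepFun Z ℙ)
    (hpos : ∀ m, ∀ᵐ ω ∂ℙ, 0 < Z m ω)
    (hF : ∀ m, ∀ z : ℝ, 0 < z → ℙ {ω | Z m ω ≤ z} = ENNReal.ofReal (Real.exp (-1 / z)))
    {ℓ ℓ' : Fin n} (hne : ℓ ≠ ℓ') {a b : ℝ} (ha : 0 < a) (hb : 0 < b) :
    ℙ {ω | a * Z ℓ ω = b * Z ℓ' ω} = 0 := by
  have hIF : IndepFun (Z ℓ) (Z ℓ') ℙ := hindep.indepFun hne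
  have hmap : (ℙ : Measure Ω).map (fun ω => (Z ℓ ω, Z ℓ' ω)) = ((ℙ : Measure Ω).map (Z ℓ)).prod ((ℙ : Measure Ω).map (Z ℓ')) :=
    (indepFun_iff_map_prod_eq_prod_map_map (hmeas ℓ).aemeasurable
      (hmeas ℓ').aemeasurable).mp hIF
  have hD : MeasurableSet {p : ℝ × ℝ | a * p.1 = b * p.2} :=
    measurableSet_eq_fun (measurable_fst.const_mul a) (measurable_snd.const_mul b)
  have hpre : {ω | a * Z ℓ ω = b * Z ℓ' ω}
      = (fun ω => (Z ℓ ω, Z ℓ' ω)) ⁻¹' {p : ℝ × ℝ | a * p.1 = b * p.2} := rfl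
  rw [hpre, ← Measure.map_apply ((hmeas ℓ).prodMk (hmeas ℓ')) hD, hmap,
    Measure.prod_apply hD]
  have hzero : ∀ x : ℝ, ((ℙ : Measure Ω).map (Z ℓ')) (Prod.mk x ⁻¹' {p : ℝ × ℝ | a * p.1 = b * p.2}) = 0 := by
    intro x
    have hset : (Prod.mk x ⁻¹' {p : ℝ × ℝ | a * p.1 = b * p.2}) = {a * x / b} := by
      ext y
      simp only [Set.mem_preimage, Set.mem_setOf_eq, Set.mem_singleton_iff]
      constructor
      · intro h; field_simp; linarith
      · intro h; rw [h]; field_simp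
    rw [hset, Measure.map_apply (hmeas ℓ') (measurableSet_singleton _)]
    exact frechet_point_null (Z ℓ') (hmeas ℓ') (hpos ℓ') (hF ℓ') _
  simp only [hzero, lintegral_zero]

lemma dom_prob {n k : ℕ} (Z : Fin n → Ω → ℝ) (φ : Fin n → Fin k → ℝ)
    (H : (Finset.univ : Finset (Fin k)).Nonempty)
    (hφ : ∀ m j, 0 ≤ φ m j)
    (hmeas : ∀ m, Measurable (Z m))
    (hindep : iIndepFun Z ℙ)
    (hpos : ∀ m, ∀ᵐ ω ∂ℙ, 0 < Z m ω)
    (hF : ∀ m, ∀ z : ℝ, 0 < z → ℙ {ω | Z m ω ≤ z} = ENNReal.ofReal (Real.exp (-1 / z)))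
    (ℓ : Fin n) (hposφ : ∀ j, 0 < φ ℓ j) :
    ℙ {ω | ∀ j, ∀ m, φ m j * Z m ω ≤ φ ℓ j * Z ℓ ω}
      = (ENNReal.ofReal (∑ m, Finset.univ.sup' H fun j => φ m j / φ ℓ j))⁻¹ := by
  classical
  set c : Fin n → ℝ := fun m => Finset.univ.sup' H fun j => φ m j / φ ℓ j with hc_def
  have hc0 : ∀ m, 0 ≤ c m := by
    intro m
    obtain ⟨j0, hj0⟩ := H
    exact le_trans (div_nonneg (hφ m j0) (hposφ j0).le) (Finset.le_sup' (fun j => φ m j / φ ℓ j) hj0)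
  have hcl : c ℓ = 1 := by
    have h1 : ∀ j ∈ Finset.univ, φ ℓ j / φ ℓ j = (fun _ : Fin k => (1:ℝ)) j :=
      fun j _ => div_self (hposφ j).ne'
    rw [hc_def]
    simp only
    rw [Finset.sup'_congr H rfl h1, Finset.sup'_const]
  set T : Finset (Fin n) := {ℓ}ᶜ with hT_def
  set C : ℝ := ∑ m ∈ T, c m with hC_def
  have hC0 : 0 ≤ C := Finset.sum_nonneg fun m _ => hc0 m
  have hsum_c : ∑ m, c m = C + 1 := by
    rw [hC_def, hT_def, ← Finset.sum_compl_add_sum {ℓ} c, Finset.sum_singleton, hcl]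
  -- pair decomposition
  set uMap : Ω → ({x // x ∈ ({ℓ} : Finset (Fin n))} → ℝ) := fun ω i => Z i ω with hu_def
  set vMap : Ω → ({x // x ∈ T} → ℝ) := fun ω i => Z i ω with hv_def
  have hu : Measurable uMap := measurable_pi_lambda _ fun i => hmeas i
  have hv : Measurable vMap := measurable_pi_lambda _ fun i => hmeas i
  have hIF : IndepFun uMap vMap ℙ :=
    hindep.indepFun_finset {ℓ} T disjoint_compl_right hmeas
  have hmap : Measure.map (fun ω => (uMap ω, vMap ω)) ℙ
      = (Measure.map uMap ℙ).prod (Measure.map vMap ℙ) :=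
    (indepFun_iff_map_prod_eq_prod_map_map hu.aemeasurable hv.aemeasurable).mp hIF
  have hℓmem : ℓ ∈ ({ℓ} : Finset (Fin n)) := Finset.mem_singleton_self ℓ
  set B : Set (({x // x ∈ ({ℓ} : Finset (Fin n))} → ℝ) × ({x // x ∈ T} → ℝ)) :=
    {p | ∀ m : {x // x ∈ T}, ∀ j, φ m j * p.2 m ≤ φ ℓ j * p.1 ⟨ℓ, hℓmem⟩} with hB_def
  have hB : MeasurableSet B := by
    have hBeq : B = ⋂ (m : {x // x ∈ T}), ⋂ j,
        {p : ({x // x ∈ ({ℓ} : Finset (Fin n))} → ℝ) × ({x // x ∈ T} → ℝ) |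
          φ m j * p.2 m ≤ φ ℓ j * p.1 ⟨ℓ, hℓmem⟩} := by
      ext p; simp [hB_def, Set.mem_iInter]
    rw [hBeq]
    exact MeasurableSet.iInter fun m => MeasurableSet.iInter fun j =>
      measurableSet_le (((measurable_pi_apply m).comp measurable_snd).const_mul _)
        (((measurable_pi_apply _).comp measurable_fst).const_mul _)
  have hev : {ω | ∀ j, ∀ m, φ m j * Z m ω ≤ φ ℓ j * Z ℓ ω}
      = (fun ω => (uMap ω, vMap ω)) ⁻¹' B := by
    ext ω
    simp only [Set.mem_setOf_eq, Set.mem_preimage, hB_def, hu_def, hv_def]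
    constructor
    · intro h m j; exact h j m
    · intro h j m
      by_cases hmℓ : m = ℓ
      · subst hmℓ; exact le_refl _
      · exact h ⟨m, by simp [hT_def, hmℓ]⟩ j
  rw [hev, ← Measure.map_apply (hu.prodMk hv) hB, hmap, Measure.prod_apply hB,
    lintegral_map (measurable_measure_prodMk_left hB) hu]
  -- slice computation
  have hslice : ∀ z : ℝ, 0 < z →
      (Measure.map vMap ℙ) {v : {x // x ∈ T} → ℝ | ∀ m : {x // x ∈ T}, ∀ j,
          φ m j * v m ≤ φ ℓ j * z}
        = ENNReal.ofReal (Real.exp (-C / z)) := by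
    intro z hz
    set t : Fin n → Set ℝ := fun m => {x | ∀ j, φ m j * x ≤ φ ℓ j * z} with ht_def
    have ht : ∀ m, MeasurableSet (t m) := by
      intro m
      have : t m = ⋂ j, {x : ℝ | φ m j * x ≤ φ ℓ j * z} := by
        ext x; simp [ht_def, Set.mem_iInter]
      rw [this]
      exact MeasurableSet.iInter fun j =>
        measurableSet_le (measurable_id.const_mul _) measurable_const
    have hV : MeasurableSet {v : {x // x ∈ T} → ℝ | ∀ m : {x // x ∈ T}, ∀ j,
        φ m j * v m ≤ φ ℓ j * z} := by
      have : {v : {x // x ∈ T} → ℝ | ∀ m : {x // x ∈ T}, ∀ j, φ m j * v m ≤ φ ℓ j * z}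
          = ⋂ (m : {x // x ∈ T}), ⋂ j, {v : {x // x ∈ T} → ℝ | φ m j * v m ≤ φ ℓ j * z} := by
        ext v; simp [Set.mem_iInter]
      rw [this]
      exact MeasurableSet.iInter fun m => MeasurableSet.iInter fun j =>
        measurableSet_le ((measurable_pi_apply m).const_mul _) measurable_const
    rw [Measure.map_apply hv hV]
    have hpre : vMap ⁻¹' {v : {x // x ∈ T} → ℝ | ∀ m : {x // x ∈ T}, ∀ j,
        φ m j * v m ≤ φ ℓ j * z} = ⋂ m ∈ T, Z m ⁻¹' t m := by
      ext ω
      simp only [Set.mem_preimage, Set.mem_setOf_eq, Set.mem_iInter, hv_def, ht_def]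
      constructor
      · intro h m hm j; exact h ⟨m, hm⟩ j
      · intro h m j; exact h m.1 m.2 j
    rw [hpre, hindep.meas_biInter (fun m _ => ⟨t m, ht m, rfl⟩)]
    -- each factor
    have hfac : ∀ m, ℙ (Z m ⁻¹' t m) = ENNReal.ofReal (Real.exp (-(c m) / z)) := by
      intro m
      rcases eq_or_lt_of_le (hc0 m) with hcm | hcm
      · have hφm : ∀ j, φ m j = 0 := by
          intro j
          have h1 : φ m j / φ ℓ j ≤ c m := Finset.le_sup' (fun j => φ m j / φ ℓ j) (Finset.mem_univ j)
          have h2 : 0 ≤ φ m j / φ ℓ j := div_nonneg (hφ m j) (hposφ j).le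
          have h3 : φ m j / φ ℓ j = 0 := le_antisymm (by rw [← hcm] at h1; exact h1) h2
          rcases div_eq_zero_iff.mp h3 with h | h
          · exact h
          · exact absurd h (hposφ j).ne'
        have htm : t m = Set.univ := by
          ext x
          simp only [ht_def, Set.mem_setOf_eq, Set.mem_univ, iff_true]
          intro j
          rw [hφm j, zero_mul]
          exact (mul_pos (hposφ j) hz).le
        rw [htm, Set.preimage_univ, measure_univ, ← hcm]
        norm_num
      · obtain ⟨j1, _, hj1⟩ := Finset.exists_mem_eq_sup' H (fun j => φ m j / φ ℓ j)
        have hcmj : c m = φ m j1 / φ ℓ j1 := hj1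
        have hφmj1 : 0 < φ m j1 := by
          rcases lt_trichotomy (φ m j1) 0 with h | h | h
          · exact absurd h (not_lt.mpr (hφ m j1))
          · rw [hcmj, h, zero_div] at hcm; exact absurd hcm (lt_irrefl 0)
          · exact h
        have htm : t m = Set.Iic (z / c m) := by
          ext x
          simp only [ht_def, Set.mem_setOf_eq, Set.mem_Iic]
          constructor
          · intro h
            have hx := h j1
            rw [hcmj, div_div_eq_mul_div, le_div_iff₀ hφmj1]
            nlinarith
          · intro h j
            rcases le_or_gt x 0 with hx0 | hx0
            · nlinarith [mul_pos (hposφ j) hz, hφ m j]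
            · have h1 : φ m j ≤ c m * φ ℓ j := by
                have h2 : φ m j / φ ℓ j ≤ c m := Finset.le_sup' (fun j => φ m j / φ ℓ j) (Finset.mem_univ j)
                rw [div_le_iff₀ (hposφ j)] at h2
                linarith
              have h2 : c m * x ≤ z := by
                have := (le_div_iff₀ hcm).mp h
                linarith [this]
              nlinarith [mul_le_mul_of_nonneg_right h1 hx0.le,
                mul_le_mul_of_nonneg_left h2 (hposφ j).le]
        rw [htm]
        have hzc : 0 < z / c m := div_pos hz hcm
        have hFm := hF m (z / c m) hzc
        have : Z m ⁻¹' Set.Iic (z / c m) = {ω | Z m ω ≤ z / c m} := rfl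
        rw [this, hFm]
        congr 1
        rw [neg_div, neg_div, one_div_div]
    have hprod : ∀ m ∈ T, ℙ (Z m ⁻¹' t m) = ENNReal.ofReal (Real.exp (-(c m) / z)) :=
      fun m _ => hfac m
    rw [Finset.prod_congr rfl hprod,
      ← ENNReal.ofReal_prod_of_nonneg (fun i _ => Real.exp_nonneg _), ← Real.exp_sum]
    congr 2
    rw [← Finset.sum_div, Finset.sum_neg_distrib, neg_div]
  -- main integral
  set f : ℝ → ℝ := fun z => if 0 < z then Real.exp (-C / z) else 0 with hf_def
  have hfm : Measurable f := by
    apply Measurable.ite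
    · exact measurableSet_Ioi
    · exact Real.measurable_exp.comp (measurable_const.div measurable_id)
    · exact measurable_const
  have hcong : ∀ᵐ ω ∂ℙ, (Measure.map vMap ℙ) (Prod.mk (uMap ω) ⁻¹' B)
      = ENNReal.ofReal (f (Z ℓ ω)) := by
    filter_upwards [hpos ℓ] with ω hω
    have hpre2 : Prod.mk (uMap ω) ⁻¹' B
        = {v : {x // x ∈ T} → ℝ | ∀ m : {x // x ∈ T}, ∀ j,
            φ m j * v m ≤ φ ℓ j * Z ℓ ω} := rfl
    rw [hpre2, hslice _ hω, hf_def]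
    simp [hω]
  rw [lintegral_congr_ae hcong, ← lintegral_map (show Measurable fun z : ℝ => ENNReal.ofReal (f z) from ENNReal.measurable_ofReal.comp hfm) (hmeas ℓ)]
  set μl : Measure ℝ := Measure.map (Z ℓ) ℙ with hμl_def
  haveI : IsProbabilityMeasure μl := Measure.isProbabilityMeasure_map (hmeas ℓ).aemeasurable
  have hae_pos : ∀ᵐ z ∂μl, 0 < z :=
    (ae_map_iff (hmeas ℓ).aemeasurable measurableSet_Ioi).mpr (hpos ℓ)
  rcases eq_or_lt_of_le hC0 with hCz | hCpos
  · -- C = 0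
    have hfeq : ∀ᵐ z ∂μl, ENNReal.ofReal (f z) = 1 := by
      filter_upwards [hae_pos] with z hz
      rw [hf_def]
      simp [hz, ← hCz]
    rw [lintegral_congr_ae hfeq, lintegral_one, measure_univ, hsum_c, ← hCz]
    norm_num
  · -- 0 < C
    have hnn : 0 ≤ᵐ[μl] f := Filter.Eventually.of_forall (fun z => by
      rw [hf_def]; dsimp only; split
      · exact Real.exp_nonneg _
      · exact le_refl 0)
    rw [lintegral_eq_lintegral_meas_lt μl hnn hfm.aemeasurable]
    have hmeaslt : ∀ t ∈ Set.Ioi (0:ℝ), μl {z | t < f z}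
        = if t < 1 then 1 - ENNReal.ofReal (t ^ (1/C)) else 0 := by
      intro t ht
      rw [Set.mem_Ioi] at ht
      by_cases h1 : t < 1
      · have hlog : Real.log t < 0 := Real.log_neg ht h1
        have hA : 0 < -Real.log t := by linarith
        set ax : ℝ := C / (-Real.log t) with hax
        have hap : 0 < ax := div_pos hCpos hA
        have hset : {z | t < f z} = Set.Ioi ax := by
          ext z
          simp only [Set.mem_setOf_eq, Set.mem_Ioi, hf_def]
          constructor
          · intro hlt
            by_cases hz : 0 < z
            · rw [if_pos hz] at hlt
              have h2 : Real.log t < -C/z := by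
                have h5 := Real.log_lt_log ht hlt
                rwa [Real.log_exp] at h5
              rw [neg_div] at h2
              have h3 : C / z < -Real.log t := by linarith
              have h4 : C < -Real.log t * z := (div_lt_iff₀ hz).mp h3
              rw [hax, div_lt_iff₀ hA]
              nlinarith
            · rw [if_neg hz] at hlt; linarith
          · intro hz'
            have hz : 0 < z := lt_trans hap hz'
            rw [if_pos hz]
            rw [hax] at hz'
            have h4 : C < z * -Real.log t := (div_lt_iff₀ hA).mp hz'
            calc t = Real.exp (Real.log t) := (Real.exp_log ht).symm
              _ < Real.exp (-C / z) := by
                  apply Real.exp_lt_exp.mpr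
                  rw [neg_div]
                  have h5 : C / z < -Real.log t := (div_lt_iff₀ hz).mpr (by nlinarith)
                  linarith
        rw [if_pos h1, hset]
        have hIic : μl (Set.Iic ax) = ENNReal.ofReal (Real.exp (-1/ax)) := by
          rw [hμl_def, Measure.map_apply (hmeas ℓ) measurableSet_Iic]
          exact hF ℓ ax hap
        have hcompl : μl (Set.Ioi ax) = 1 - μl (Set.Iic ax) := by
          rw [← Set.compl_Iic, measure_compl measurableSet_Iic (measure_ne_top _ _),
            measure_univ]
        rw [hcompl, hIic]
        congr 2
        rw [Real.rpow_def_of_pos ht]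
        congr 1
        rw [hax]
        rw [mul_one_div]
        rw [div_div_eq_mul_div]
        field_simp
      · rw [if_neg h1]
        push_neg at h1
        have hset : {z | t < f z} = ∅ := by
          ext z
          simp only [Set.mem_setOf_eq, Set.mem_empty_iff_false, iff_false, not_lt, hf_def]
          split
          · rename_i hz
            have h5 : Real.exp (-C/z) < 1 := by
              rw [← Real.exp_zero]
              apply Real.exp_lt_exp.mpr
              have h6 : 0 < C / z := div_pos hCpos hz
              rw [neg_div]; linarith
            linarith
          · linarith
        rw [hset]
        exact measure_empty
    rw [setLIntegral_congr_fun measurableSet_Ioi hmeaslt]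
    have hind : ∀ t : ℝ, (Set.Ioi (0:ℝ)).indicator
        (fun t => if t < 1 then 1 - ENNReal.ofReal (t ^ (1/C)) else 0) t
        = (Set.Ioo (0:ℝ) 1).indicator (fun t => 1 - ENNReal.ofReal (t ^ (1/C))) t := by
      intro t
      by_cases h0 : 0 < t <;> by_cases h1' : t < 1 <;>
        simp [Set.indicator, Set.mem_Ioi, Set.mem_Ioo, h0, h1']
    rw [← lintegral_indicator measurableSet_Ioi, lintegral_congr hind,
      lintegral_indicator measurableSet_Ioo]
    have hr : 0 < 1/C := by positivity
    have hgm : Measurable fun t : ℝ => ENNReal.ofReal (t ^ (1/C)) :=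
      ENNReal.measurable_ofReal.comp (measurable_id.pow measurable_const)
    have hle : (fun t : ℝ => ENNReal.ofReal (t ^ (1/C)))
        ≤ᵐ[volume.restrict (Set.Ioo (0:ℝ) 1)] (fun _ => (1:ℝ≥0∞)) := by
      rw [Filter.EventuallyLE, ae_restrict_iff' measurableSet_Ioo]
      refine Filter.Eventually.of_forall fun t ht => ?_
      obtain ⟨ht0, ht1⟩ := ht
      calc ENNReal.ofReal (t ^ (1/C)) ≤ ENNReal.ofReal 1 :=
            ENNReal.ofReal_le_ofReal (Real.rpow_le_one ht0.le ht1.le hr.le)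
        _ = 1 := ENNReal.ofReal_one
    have hfin : ∫⁻ t in Set.Ioo (0:ℝ) 1, ENNReal.ofReal (t ^ (1/C)) ≠ ⊤ := by
      have hb : ∫⁻ t in Set.Ioo (0:ℝ) 1, ENNReal.ofReal (t ^ (1/C))
          ≤ ∫⁻ _ in Set.Ioo (0:ℝ) 1, (1:ℝ≥0∞) := lintegral_mono_ae hle
      have hone : (∫⁻ _ in Set.Ioo (0:ℝ) 1, (1:ℝ≥0∞)) = volume (Set.Ioo (0:ℝ) 1) :=
        setLIntegral_one _
      rw [hone, Real.volume_Ioo] at hb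
      exact ne_top_of_le_ne_top (by simp) hb
    have hsub := lintegral_sub hgm hfin hle
    rw [hsub, setLIntegral_one, Real.volume_Ioo]
    have hInt : IntegrableOn (fun t : ℝ => t ^ (1/C)) (Set.Ioo 0 1) := by
      have h7 : IntervalIntegrable (fun t : ℝ => t ^ (1/C)) volume 0 1 :=
        intervalIntegral.intervalIntegrable_rpow (Or.inl hr.le)
      rw [intervalIntegrable_iff_integrableOn_Ioc_of_le zero_le_one] at h7
      exact h7.mono_set Set.Ioo_subset_Ioc_self
    have hlint : ∫⁻ t in Set.Ioo (0:ℝ) 1, ENNReal.ofReal (t ^ (1/C))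
        = ENNReal.ofReal (∫ t in Set.Ioo (0:ℝ) 1, t ^ (1/C)) := by
      rw [ofReal_integral_eq_lintegral_ofReal hInt]
      rw [Filter.EventuallyLE, ae_restrict_iff' measurableSet_Ioo]
      exact Filter.Eventually.of_forall fun t ht => Real.rpow_nonneg ht.1.le _
    have hreal : ∫ t in Set.Ioo (0:ℝ) 1, t ^ (1/C) = 1/(1/C + 1) := by
      rw [← integral_Ioc_eq_integral_Ioo, ← intervalIntegral.integral_of_le zero_le_one,
        integral_rpow (Or.inl (by linarith : (-1:ℝ) < 1/C))]
      rw [Real.one_rpow, Real.zero_rpow (by positivity : 1/C + 1 ≠ 0)]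
      ring
    rw [hlint, hreal, hsum_c]
    have h1C : (0:ℝ) < C + 1 := by linarith
    have hv9 : (1:ℝ)/(1/C + 1) = C / (C+1) := by
      rw [div_add' _ _ _ hCpos.ne', one_div_div]
      congr 1
      field_simp
      ring
    rw [hv9]
    norm_num
    have h8 : (1:ℝ≥0∞) - ENNReal.ofReal (C/(C+1)) = ENNReal.ofReal (1 - C/(C+1)) := by
      rw [ENNReal.ofReal_sub 1 (by positivity : (0:ℝ) ≤ C/(C+1)), ENNReal.ofReal_one]
    rw [h8]
    have h9 : (1:ℝ) - C/(C+1) = (C+1)⁻¹ := by field_simp; ring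
    rw [h9, ENNReal.ofReal_inv_of_pos h1C]

end Aux

/-- In the max-linear model, the extremal concurrence probability (some single component
dominates at all `k` sites) equals the sum of the domination probabilities
`p_ℓ = [∑_m max_j φ_m(s_j)/φ_ℓ(s_j)]⁻¹` (division in `ℝ≥0∞`, so `0/0 = 0`,
`a/0 = ∞`, `1/∞ = 0`). -/
theorem stmt7 {Ω : Type*} [MeasureSpace Ω] [IsProbabilityMeasure (ℙ : Measure Ω)]
    (n k : ℕ) (hn : 0 < n) (hk : 0 < k)
    (Z : Fin n → Ω → ℝ) (φ : Fin n → Fin k → ℝ)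
    (hφ : ∀ m j, 0 ≤ φ m j) (hsum : ∀ j, ∑ m, φ m j = 1)
    (hmeas : ∀ m, Measurable (Z m))
    (hindep : iIndepFun Z ℙ)
    (hpos : ∀ m, ∀ᵐ ω ∂ℙ, 0 < Z m ω)
    (hF : ∀ m, ∀ z : ℝ, 0 < z → ℙ {ω | Z m ω ≤ z} = ENNReal.ofReal (Real.exp (-1 / z))) :
    ℙ {ω | ∃ ℓ, ∀ j, (⨆ m, φ m j * Z m ω) = φ ℓ j * Z ℓ ω}
      = ∑ ℓ, (∑ m, ⨆ j, ENNReal.ofReal (φ m j) / ENNReal.ofReal (φ ℓ j))⁻¹ := by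
  classical
  have hne : Nonempty (Fin n) := ⟨⟨0, hn⟩⟩
  have hkne : Nonempty (Fin k) := ⟨⟨0, hk⟩⟩
  have H : (Finset.univ : Finset (Fin k)).Nonempty := Finset.univ_nonempty
  set A : Fin n → Set Ω := fun ℓ => {ω | ∀ j, ∀ m, φ m j * Z m ω ≤ φ ℓ j * Z ℓ ω} with hA_def
  have hAmeas : ∀ ℓ, MeasurableSet (A ℓ) := by
    intro ℓ
    have : A ℓ = ⋂ j, ⋂ m, {ω | φ m j * Z m ω ≤ φ ℓ j * Z ℓ ω} := by
      ext ω; simp [hA_def, Set.mem_iInter]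
    rw [this]
    exact MeasurableSet.iInter fun j => MeasurableSet.iInter fun m =>
      measurableSet_le ((hmeas m).const_mul _) ((hmeas ℓ).const_mul _)
  -- existence of positive coefficient at each site
  have hex : ∀ j : Fin k, ∃ m0, 0 < φ m0 j := by
    intro j
    by_contra hcon
    push_neg at hcon
    have h0 : ∑ m, φ m j = 0 :=
      Finset.sum_eq_zero fun m _ => le_antisymm (hcon m) (hφ m j)
    rw [hsum j] at h0
    norm_num at h0
  have hnullA : ∀ ℓ, (∃ j, φ ℓ j = 0) → ℙ (A ℓ) = 0 := by
    rintro ℓ ⟨j0, hj0⟩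
    obtain ⟨m0, hm0⟩ := hex j0
    have hsub : A ℓ ⊆ {ω | ¬ 0 < φ m0 j0 * Z m0 ω} := by
      intro ω hω
      have h1 := hω j0 m0
      rw [hj0, zero_mul] at h1
      simp only [Set.mem_setOf_eq, not_lt]
      exact h1
    refine measure_mono_null hsub (ae_iff.mp ?_)
    filter_upwards [hpos m0] with ω h using mul_pos hm0 h
  have hEq : {ω | ∃ ℓ, ∀ j, (⨆ m, φ m j * Z m ω) = φ ℓ j * Z ℓ ω} = ⋃ ℓ, A ℓ := by
    ext ω
    simp only [Set.mem_setOf_eq, Set.mem_iUnion, hA_def]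
    apply exists_congr
    intro ℓ
    constructor
    · intro h j m
      rw [← h j]
      exact le_ciSup (f := fun m => φ m j * Z m ω) (Set.Finite.bddAbove (Set.finite_range _)) m
    · intro h j
      exact le_antisymm (ciSup_le fun m => h j m)
        (le_ciSup (f := fun m => φ m j * Z m ω) (Set.Finite.bddAbove (Set.finite_range _)) ℓ)
  rw [hEq]
  have hdisj : Pairwise (Function.onFun (AEDisjoint ℙ) A) := by
    intro ℓ ℓ' hℓℓ'
    set j0 : Fin k := ⟨0, hk⟩
    by_cases h1 : φ ℓ j0 = 0
    · exact measure_mono_null Set.inter_subset_left (hnullA ℓ ⟨j0, h1⟩)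
    by_cases h2 : φ ℓ' j0 = 0
    · exact measure_mono_null Set.inter_subset_right (hnullA ℓ' ⟨j0, h2⟩)
    · have hp1 : 0 < φ ℓ j0 := lt_of_le_of_ne (hφ ℓ j0) (Ne.symm h1)
      have hp2 : 0 < φ ℓ' j0 := lt_of_le_of_ne (hφ ℓ' j0) (Ne.symm h2)
      have hsub : A ℓ ∩ A ℓ' ⊆ {ω | φ ℓ j0 * Z ℓ ω = φ ℓ' j0 * Z ℓ' ω} := by
        rintro ω ⟨ha, hb⟩
        exact le_antisymm (hb j0 ℓ) (ha j0 ℓ')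
      exact measure_mono_null hsub
        (pair_null Z hmeas hindep hpos hF hℓℓ' hp1 hp2)
  rw [measure_iUnion₀ hdisj fun ℓ => (hAmeas ℓ).nullMeasurableSet, tsum_fintype]
  apply Finset.sum_congr rfl
  intro ℓ _
  by_cases hB : ∀ j, 0 < φ ℓ j
  · rw [dom_prob Z φ H hφ hmeas hindep hpos hF ℓ hB]
    congr 1
    have hterm : ∀ m, (⨆ j, ENNReal.ofReal (φ m j) / ENNReal.ofReal (φ ℓ j))
        = ENNReal.ofReal (Finset.univ.sup' H fun j => φ m j / φ ℓ j) := by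
      intro m
      apply le_antisymm
      · apply iSup_le
        intro j
        rw [← ENNReal.ofReal_div_of_pos (hB j)]
        exact ENNReal.ofReal_le_ofReal
          (Finset.le_sup' (fun j => φ m j / φ ℓ j) (Finset.mem_univ j))
      · obtain ⟨j1, _, hj1⟩ := Finset.exists_mem_eq_sup' H (fun j => φ m j / φ ℓ j)
        rw [hj1, ENNReal.ofReal_div_of_pos (hB j1)]
        exact le_iSup (fun j => ENNReal.ofReal (φ m j) / ENNReal.ofReal (φ ℓ j)) j1
    rw [ENNReal.ofReal_sum_of_nonneg (fun m _ => ?_)]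
    · exact Finset.sum_congr rfl fun m _ => (hterm m).symm
    · obtain ⟨j0', hj0'⟩ := H
      exact le_trans (div_nonneg (hφ m j0') (hB j0').le)
        (Finset.le_sup' (fun j => φ m j / φ ℓ j) hj0')
  · push_neg at hB
    obtain ⟨j0, hj0⟩ := hB
    have hj0' : φ ℓ j0 = 0 := le_antisymm hj0 (hφ ℓ j0)
    rw [hnullA ℓ ⟨j0, hj0'⟩]
    obtain ⟨m0, hm0⟩ := hex j0
    have hterm : (⨆ j, ENNReal.ofReal (φ m0 j) / ENNReal.ofReal (φ ℓ j)) = ⊤ := by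
      refine top_unique ?_
      have h3 : ENNReal.ofReal (φ m0 j0) / ENNReal.ofReal (φ ℓ j0) = ⊤ := by
        rw [hj0', ENNReal.ofReal_zero,
          ENNReal.div_zero (by simpa using (ENNReal.ofReal_pos.mpr hm0).ne')]
      exact h3 ▸ le_iSup (fun j => ENNReal.ofReal (φ m0 j) / ENNReal.ofReal (φ ℓ j)) j0
    have hsumtop : (∑ m, ⨆ j, ENNReal.ofReal (φ m j) / ENNReal.ofReal (φ ℓ j)) = ⊤ :=
      ENNReal.sum_eq_top.mpr ⟨m0, Finset.mem_univ m0, hterm⟩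
    rw [hsumtop, ENNReal.inv_top]
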